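/- Consider a sequence of logistic regression problems indexed by n with dimension p = p(n) satisfying p(n)/n → 0. For each n: the observed pairs (X_i, Y_i), i = 1, …, n, are independent with Y_i | X_i ~ Bernoulli(ρ'(⟨X_i, β₀⟩)), where the true coefficient vector β₀ = β₀(n) ∈ ℝ^p satisfies ‖β₀‖₂ ≤ C₃ (Condition 4); E‖X_i‖₂² ≤ C₂·p for all i (Condition 2); and, almost surely, there exist constants c₁, c₂ > 0, ζ ∈ (0,1), N₀ (not depending on n) such that for every n > N₀ and every S ⊆ {1,…,n} with |S| ≥ (1−ζ)n, c₁|S| ≤ λ_min(Σ_{i∈S} X_i X_iᵀ) ≤ λ_max(Σ_{i∈S} X_i X_iᵀ) ≤ c₂|S| (Condition 3). Let the synthetic data (X*_i, Y*_i)_{i=1}^M ⊂ ℝ^p × {0,1} satisfy ‖(1/M) Σ_{i=1}^M X*_i X*_iᵀ‖_op ≤ Λ for a constant Λ, and let the tuning parameter satisfy 0 < τ = τ(n) ≤ C₄·p. Then ‖β̂_M − β₀‖₂² = O_p(p/n); that is, for every ε > 0 there exist B̃ < ∞ and N such that for all n ≥ N, P( ‖β̂_M − β₀‖₂² > B̃·p(n)/n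 ) ≤ ε. -/

import Mathlib

set_option maxHeartbeats 1000000

open Set


open MeasureTheory ProbabilityTheory Filter
open scoped RealInnerProductSpace BigOperators ENNReal

/-- The logistic log-partition function `ρ(t) = log(1 + eᵗ)`. -/
noncomputable def rho (t : ℝ) : ℝ := Real.log (1 + Real.exp t)

/-- The logistic (sigmoid) function `ρ'(t) = eᵗ/(1 + eᵗ)`. -/
noncomputable def rho' (t : ℝ) : ℝ := Real.exp t / (1 + Real.exp t)

/-- The catalytic-prior MAP objective (to be maximized). -/
noncomputable def mapObj {n M p : ℕ} (τ : ℝ)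
    (X : Fin n → EuclideanSpace ℝ (Fin p)) (Y : Fin n → ℝ)
    (Xs : Fin M → EuclideanSpace ℝ (Fin p)) (Ys : Fin M → ℝ)
    (β : EuclideanSpace ℝ (Fin p)) : ℝ :=
  (∑ i, (Y i * ⟪X i, β⟫ - rho ⟪X i, β⟫)) +
    (τ / M) * ∑ i, (Ys i * ⟪Xs i, β⟫ - rho ⟪Xs i, β⟫)

noncomputable def rho'' (t : ℝ) : ℝ := Real.exp t / (1 + Real.exp t) ^ 2

lemma one_add_exp_pos (t : ℝ) : 0 < 1 + Real.exp t := by positivity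

lemma rho'_nonneg (t : ℝ) : 0 ≤ rho' t := by
  unfold rho'; positivity

lemma rho'_le_one (t : ℝ) : rho' t ≤ 1 := by
  unfold rho'
  rw [div_le_one (one_add_exp_pos t)]
  linarith

lemma rho''_nonneg (t : ℝ) : 0 ≤ rho'' t := by unfold rho''; positivity

lemma hasDerivAt_rho (t : ℝ) : HasDerivAt rho (rho' t) t := by
  have h1 : HasDerivAt (fun t : ℝ => 1 + Real.exp t) (Real.exp t) t :=
    (Real.hasDerivAt_exp t).const_add 1
  have h2 := (Real.hasDerivAt_log (x := 1 + Real.exp t) (ne_of_gt (one_add_exp_pos t))).comp t h1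
  rw [show rho = fun x => Real.log (1 + Real.exp x) from rfl]
  simpa [rho, rho', Function.comp_def, div_eq_mul_inv, mul_comm] using h2

lemma hasDerivAt_rho' (t : ℝ) : HasDerivAt rho' (rho'' t) t := by
  have h1 : HasDerivAt (fun t : ℝ => Real.exp t) (Real.exp t) t := Real.hasDerivAt_exp t
  have h2 : HasDerivAt (fun t : ℝ => 1 + Real.exp t) (Real.exp t) t :=
    (Real.hasDerivAt_exp t).const_add 1
  have h3 := h1.div h2 (ne_of_gt (one_add_exp_pos t))
  have : (Real.exp t * (1 + Real.exp t) - Real.exp t * Real.exp t) / (1 + Real.exp t) ^ 2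
      = rho'' t := by
    unfold rho''; ring_nf
  rw [this] at h3
  exact h3

lemma rho''_ge (K : ℝ) {x : ℝ} (hx : |x| ≤ K) :
    Real.exp (-K) / (1 + Real.exp K) ^ 2 ≤ rho'' x := by
  have hx1 : -K ≤ x := neg_le_of_abs_le hx
  have hx2 : x ≤ K := le_of_abs_le hx
  unfold rho''
  have h1 : Real.exp (-K) ≤ Real.exp x := Real.exp_le_exp.2 hx1
  have h2 : (1 + Real.exp x) ^ 2 ≤ (1 + Real.exp K) ^ 2 := by
    have := Real.exp_le_exp.2 hx2
    nlinarith [Real.exp_pos x, Real.exp_pos K]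
  have h3 : 0 < (1 + Real.exp x) ^ 2 := by positivity
  have h4 : 0 < (1 + Real.exp K) ^ 2 := by positivity
  exact div_le_div₀ (Real.exp_pos x).le h1 h3 h2

lemma breg (a h κ : ℝ) (hκ : ∀ x ∈ Set.uIcc a (a + h), κ ≤ rho'' x) :
    rho a + h * rho' a + κ * h ^ 2 / 2 ≤ rho (a + h) := by
  set G : ℝ → ℝ := fun s => rho (a + s) - s * rho' a - κ * s ^ 2 / 2 with hGdef
  set G' : ℝ → ℝ := fun s => rho' (a + s) - rho' a - κ * s with hG'def
  have hG : ∀ s : ℝ, HasDerivAt G (G' s) s := by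
    intro s
    have h1 : HasDerivAt (fun s : ℝ => rho (a + s)) (rho' (a + s)) s := by
      have := (hasDerivAt_rho (a + s)).comp s ((hasDerivAt_id s).const_add a)
      simpa [Function.comp_def] using this
    have h2 : HasDerivAt (fun s : ℝ => s * rho' a) (rho' a) s := by
      simpa using (hasDerivAt_id s).mul_const (rho' a)
    have h3 : HasDerivAt (fun s : ℝ => κ * s ^ 2 / 2) (κ * s) s := by
      have := ((hasDerivAt_pow 2 s).const_mul κ).div_const 2
      simpa using this.congr_deriv (by ring)
    exact (h1.sub h2).sub h3
  have hGc : Continuous G := by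
    have : Differentiable ℝ G := fun s => (hG s).differentiableAt
    exact this.continuous
  have hrho'c : Continuous rho' := by
    have : Differentiable ℝ rho' := fun s => (hasDerivAt_rho' s).differentiableAt
    exact this.continuous
  have key : G 0 ≤ G h := by
    rcases lt_trichotomy h 0 with hh | hh | hh
    · obtain ⟨c, hc, hceq⟩ := exists_hasDerivAt_eq_slope G G' hh hGc.continuousOn
        (fun x _ => hG x)
      obtain ⟨d, hd, hdeq⟩ := exists_hasDerivAt_eq_slope rho' rho''
        (show a + c < a by linarith [hc.2]) hrho'c.continuousOn
        (fun x _ => hasDerivAt_rho' x)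
      have hkd : κ ≤ rho'' d := by
        apply hκ
        rw [Set.uIcc_of_ge (by linarith : a + h ≤ a)]
        exact ⟨by linarith [hd.1, hc.1], by linarith [hd.2]⟩
      have hslope : rho' (a + c) - rho' a = rho'' d * c := by
        have hden : a - (a + c) = -c := by ring
        rw [hden, eq_div_iff (show (-c) ≠ 0 by intro hcc; have := hc.2; nlinarith)] at hdeq
        linarith
      have hGc' : G' c ≤ 0 := by
        have : G' c = (rho'' d - κ) * c := by simp only [hG'def]; linarith [hslope]
        rw [this]
        exact mul_nonpos_of_nonneg_of_nonpos (by linarith) (le_of_lt hc.2)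
      rw [eq_div_iff (show (0:ℝ) - h ≠ 0 by linarith)] at hceq
      have := mul_nonpos_of_nonpos_of_nonneg hGc' (by linarith : (0:ℝ) ≤ 0 - h)
      linarith
    · simp [hh, hGdef]
    · obtain ⟨c, hc, hceq⟩ := exists_hasDerivAt_eq_slope G G' hh hGc.continuousOn
        (fun x _ => hG x)
      obtain ⟨d, hd, hdeq⟩ := exists_hasDerivAt_eq_slope rho' rho''
        (show a < a + c by linarith [hc.1]) hrho'c.continuousOn
        (fun x _ => hasDerivAt_rho' x)
      have hkd : κ ≤ rho'' d := by
        apply hκ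
        rw [Set.uIcc_of_le (by linarith : a ≤ a + h)]
        exact ⟨by linarith [hd.1], by linarith [hd.2, hc.2]⟩
      have hslope : rho' (a + c) - rho' a = rho'' d * c := by
        have hden : a + c - a = c := by ring
        rw [hden, eq_div_iff (show c ≠ 0 by intro hcc; have := hc.1; nlinarith)] at hdeq
        linarith
      have hGc' : 0 ≤ G' c := by
        have : G' c = (rho'' d - κ) * c := by simp only [hG'def]; linarith [hslope]
        rw [this]
        exact mul_nonneg (by linarith) (le_of_lt hc.1)
      rw [eq_div_iff (show h - 0 ≠ 0 by linarith)] at hceq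
      have := mul_nonneg hGc' (by linarith : (0:ℝ) ≤ h - 0)
      linarith
  have h0 : G 0 = rho a := by simp [hGdef]
  have hh : G h = rho (a + h) - h * rho' a - κ * h ^ 2 / 2 := by simp [hGdef]
  rw [h0, hh] at key
  linarith

lemma breg_nonneg (a h : ℝ) : rho a + h * rho' a ≤ rho (a + h) := by
  have := breg a h 0 (fun x _ => rho''_nonneg x)
  linarith

lemma rho_tangent (x y : ℝ) : rho x + (y - x) * rho' x ≤ rho y := by
  have := breg_nonneg x (y - x)
  simpa using this

lemma rho_convex_combo (a b l m : ℝ) (hl : 0 ≤ l) (hm : 0 ≤ m) (hlm : l + m = 1) :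
    rho (l * a + m * b) ≤ l * rho a + m * rho b := by
  have t1 := rho_tangent (l * a + m * b) a
  have t2 := rho_tangent (l * a + m * b) b
  have e1 := mul_le_mul_of_nonneg_left t1 hl
  have e2 := mul_le_mul_of_nonneg_left t2 hm
  have key : l * (rho (l*a+m*b) + (a - (l*a+m*b)) * rho' (l*a+m*b))
      + m * (rho (l*a+m*b) + (b - (l*a+m*b)) * rho' (l*a+m*b)) = rho (l*a+m*b) := by
    linear_combination (rho (l*a+m*b) - rho' (l*a+m*b) * (l*a+m*b)) * hlm
  linarith

lemma count_le {n : ℕ} (w : Fin n → ℝ) (T A : ℝ) (hw : ∀ i, 0 ≤ w i) (hT : 0 < T)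
    (hA : ∑ i, w i ≤ A) :
    (T * (Finset.univ.filter (fun i => T < w i)).card : ℝ) ≤ A := by
  classical
  calc (T * (Finset.univ.filter (fun i => T < w i)).card : ℝ)
      = ∑ _i ∈ Finset.univ.filter (fun i => T < w i), T := by
        rw [Finset.sum_const, nsmul_eq_mul, mul_comm]
    _ ≤ ∑ i ∈ Finset.univ.filter (fun i => T < w i), w i := by
        apply Finset.sum_le_sum
        intro i hi
        exact le_of_lt (Finset.mem_filter.mp hi).2
    _ ≤ ∑ i, w i := Finset.sum_le_sum_of_subset_of_nonneg (Finset.filter_subset _ _)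
        (fun i _ _ => hw i)
    _ ≤ A := hA

noncomputable def KK (c₂ ζ C₃ : ℝ) : ℝ :=
  Real.sqrt (2 * c₂ * C₃ ^ 2 / ζ) + Real.sqrt (2 * c₂ / ζ)
noncomputable def kap (c₂ ζ C₃ : ℝ) : ℝ :=
  Real.exp (-(KK c₂ ζ C₃)) / (1 + Real.exp (KK c₂ ζ C₃)) ^ 2

lemma kap_pos (c₂ ζ C₃ : ℝ) : 0 < kap c₂ ζ C₃ := by
  unfold kap; positivity

lemma mapObj_concave {n M p : ℕ} (τ : ℝ) (hτ : 0 ≤ τ)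
    (X : Fin n → EuclideanSpace ℝ (Fin p)) (Y : Fin n → ℝ)
    (Xs : Fin M → EuclideanSpace ℝ (Fin p)) (Ys : Fin M → ℝ)
    (w₁ w₂ : EuclideanSpace ℝ (Fin p)) (l m : ℝ)
    (hl : 0 ≤ l) (hm : 0 ≤ m) (hlm : l + m = 1) :
    l * mapObj τ X Y Xs Ys w₁ + m * mapObj τ X Y Xs Ys w₂
      ≤ mapObj τ X Y Xs Ys (l • w₁ + m • w₂) := by
  have hi : ∀ x : EuclideanSpace ℝ (Fin p),
      ⟪x, l • w₁ + m • w₂⟫ = l * ⟪x, w₁⟫ + m * ⟪x, w₂⟫ := fun x => by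
    rw [inner_add_right, real_inner_smul_right, real_inner_smul_right]
  unfold mapObj
  simp only [hi]
  have S1 : l * ∑ i, (Y i * ⟪X i, w₁⟫ - rho ⟪X i, w₁⟫)
      + m * ∑ i, (Y i * ⟪X i, w₂⟫ - rho ⟪X i, w₂⟫)
      ≤ ∑ i, (Y i * (l * ⟪X i, w₁⟫ + m * ⟪X i, w₂⟫)
          - rho (l * ⟪X i, w₁⟫ + m * ⟪X i, w₂⟫)) := by
    rw [Finset.mul_sum, Finset.mul_sum, ← Finset.sum_add_distrib]
    apply Finset.sum_le_sum
    intro i _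
    have := rho_convex_combo ⟪X i, w₁⟫ ⟪X i, w₂⟫ l m hl hm hlm
    nlinarith [this]
  have S2 : l * ∑ i, (Ys i * ⟪Xs i, w₁⟫ - rho ⟪Xs i, w₁⟫)
      + m * ∑ i, (Ys i * ⟪Xs i, w₂⟫ - rho ⟪Xs i, w₂⟫)
      ≤ ∑ i, (Ys i * (l * ⟪Xs i, w₁⟫ + m * ⟪Xs i, w₂⟫)
          - rho (l * ⟪Xs i, w₁⟫ + m * ⟪Xs i, w₂⟫)) := by
    rw [Finset.mul_sum, Finset.mul_sum, ← Finset.sum_add_distrib]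
    apply Finset.sum_le_sum
    intro i _
    have := rho_convex_combo ⟪Xs i, w₁⟫ ⟪Xs i, w₂⟫ l m hl hm hlm
    nlinarith [this]
  have hτM : 0 ≤ τ / (M : ℝ) := by positivity
  nlinarith [mul_le_mul_of_nonneg_left S2 hτM]

lemma det_main {p n M : ℕ} (hM : 1 ≤ M)
    (X : Fin n → EuclideanSpace ℝ (Fin p)) (Y : Fin n → ℝ)
    (Xs : Fin M → EuclideanSpace ℝ (Fin p)) (Ys : Fin M → ℝ)
    (β₀ βh : EuclideanSpace ℝ (Fin p)) (τ Λ c₁ c₂ ζ C₃ t : ℝ)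
    (hc₁ : 0 < c₁) (hc₂ : 0 < c₂) (hζ0 : 0 < ζ) (hζ1 : ζ < 1) (hC₃ : 0 < C₃)
    (hβ₀ : ‖β₀‖ ≤ C₃) (hτ0 : 0 < τ) (hΛ0 : 0 ≤ Λ)
    (hYs : ∀ i, Ys i = 0 ∨ Ys i = 1)
    (hop : ∀ v : EuclideanSpace ℝ (Fin p), (M : ℝ)⁻¹ * ∑ i, ⟪Xs i, v⟫ ^ 2 ≤ Λ * ‖v‖ ^ 2)
    (hcond : ∀ S : Finset (Fin n), (1 - ζ) * n ≤ S.card →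
       ∀ v : EuclideanSpace ℝ (Fin p),
         c₁ * S.card * ‖v‖ ^ 2 ≤ ∑ i ∈ S, ⟪X i, v⟫ ^ 2 ∧
           ∑ i ∈ S, ⟪X i, v⟫ ^ 2 ≤ c₂ * S.card * ‖v‖ ^ 2)
    (hmax : ∀ β, mapObj τ X Y Xs Ys β ≤ mapObj τ X Y Xs Ys βh)
    (ht0 : 0 < t) (ht1 : t ≤ 1)
    (key : ‖∑ i, (Y i - rho' ⟪X i, β₀⟫) • X i‖ + τ * Real.sqrt Λ
      < c₁ * kap c₂ ζ C₃ * (1 - ζ) / 2 * t * n) :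
    ‖βh - β₀‖ < t := by
  classical
  by_contra hcon
  push_neg at hcon
  set r : ℝ := ‖βh - β₀‖ with hrdef
  have hr0 : 0 < r := lt_of_lt_of_le ht0 hcon
  have hrne : r ≠ 0 := ne_of_gt hr0
  have hsub : βh - β₀ ≠ 0 := by
    intro h0
    rw [hrdef, h0, norm_zero] at hr0
    exact lt_irrefl 0 hr0
  set u : EuclideanSpace ℝ (Fin p) := r⁻¹ • (βh - β₀) with hudef
  have hu : ‖u‖ = 1 := by
    rw [hudef, norm_smul, norm_inv, norm_norm, ← hrdef, inv_mul_cancel₀ hrne]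
  have hβh : βh = β₀ + r • u := by
    rw [hudef, smul_smul, mul_inv_cancel₀ hrne, one_smul]
    abel
  -- Step A: mapObj (β₀ + t • u) ≥ mapObj β₀
  have stepA : mapObj τ X Y Xs Ys β₀ ≤ mapObj τ X Y Xs Ys (β₀ + t • u) := by
    set l : ℝ := t / r with hldef
    have hl0 : 0 ≤ l := by positivity
    have hl1 : l ≤ 1 := by
      rw [hldef, div_le_one hr0]; exact hcon
    have hcombo : (1 - l) • β₀ + l • βh = β₀ + t • u := by
      rw [hβh]
      have hlr : l * r = t := by rw [hldef]; field_simp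
      rw [← hlr]
      module
    have := mapObj_concave τ (le_of_lt hτ0) X Y Xs Ys β₀ βh (1 - l) l
      (by linarith) hl0 (by ring)
    rw [hcombo] at this
    have hbig := hmax β₀
    nlinarith [this, hbig, hl0]
  -- notation
  set Z : EuclideanSpace ℝ (Fin p) := ∑ i, (Y i - rho' ⟪X i, β₀⟫) • X i with hZdef
  set κ : ℝ := kap c₂ ζ C₃ with hκdef
  have hκ0 : 0 < κ := kap_pos c₂ ζ C₃
  set T₁ : ℝ := 2 * c₂ * C₃ ^ 2 / ζ with hT₁def
  set T₂ : ℝ := 2 * c₂ / ζ with hT₂def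
  have hT₁0 : 0 < T₁ := by rw [hT₁def]; positivity
  have hT₂0 : 0 < T₂ := by rw [hT₂def]; positivity
  -- difference formula
  have hin : ∀ x : EuclideanSpace ℝ (Fin p), ⟪x, β₀ + t • u⟫ = ⟪x, β₀⟫ + t * ⟪x, u⟫ :=
    fun x => by rw [inner_add_right, real_inner_smul_right]
  have hdiff : mapObj τ X Y Xs Ys (β₀ + t • u) - mapObj τ X Y Xs Ys β₀
      = (t * ∑ i, (Y i - rho' ⟪X i, β₀⟫) * ⟪X i, u⟫
          - ∑ i, (rho (⟪X i, β₀⟫ + t * ⟪X i, u⟫) - rho ⟪X i, β₀⟫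
              - t * ⟪X i, u⟫ * rho' ⟪X i, β₀⟫))
        + (τ / M) * (t * ∑ i, (Ys i - rho' ⟪Xs i, β₀⟫) * ⟪Xs i, u⟫
          - ∑ i, (rho (⟪Xs i, β₀⟫ + t * ⟪Xs i, u⟫) - rho ⟪Xs i, β₀⟫
              - t * ⟪Xs i, u⟫ * rho' ⟪Xs i, β₀⟫)) := by
    have hobs : ∑ i, (Y i * (⟪X i, β₀⟫ + t * ⟪X i, u⟫)
        - rho (⟪X i, β₀⟫ + t * ⟪X i, u⟫)) - ∑ i, (Y i * ⟪X i, β₀⟫ - rho ⟪X i, β₀⟫)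
        = t * ∑ i, (Y i - rho' ⟪X i, β₀⟫) * ⟪X i, u⟫
          - ∑ i, (rho (⟪X i, β₀⟫ + t * ⟪X i, u⟫) - rho ⟪X i, β₀⟫
              - t * ⟪X i, u⟫ * rho' ⟪X i, β₀⟫) := by
      rw [Finset.mul_sum, ← Finset.sum_sub_distrib, ← Finset.sum_sub_distrib]
      exact Finset.sum_congr rfl (fun i _ => by ring)
    have hsyn : ∑ i, (Ys i * (⟪Xs i, β₀⟫ + t * ⟪Xs i, u⟫)
        - rho (⟪Xs i, β₀⟫ + t * ⟪Xs i, u⟫)) - ∑ i, (Ys i * ⟪Xs i, β₀⟫ - rho ⟪Xs i, β₀⟫)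
        = t * ∑ i, (Ys i - rho' ⟪Xs i, β₀⟫) * ⟪Xs i, u⟫
          - ∑ i, (rho (⟪Xs i, β₀⟫ + t * ⟪Xs i, u⟫) - rho ⟪Xs i, β₀⟫
              - t * ⟪Xs i, u⟫ * rho' ⟪Xs i, β₀⟫) := by
      rw [Finset.mul_sum, ← Finset.sum_sub_distrib, ← Finset.sum_sub_distrib]
      exact Finset.sum_congr rfl (fun i _ => by ring)
    unfold mapObj
    simp only [hin]
    linear_combination hobs + (τ / (M:ℝ)) * hsyn
  -- score term bound
  have hZu : ∑ i, (Y i - rho' ⟪X i, β₀⟫) * ⟪X i, u⟫ ≤ ‖Z‖ := by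
    have he : ∑ i, (Y i - rho' ⟪X i, β₀⟫) * ⟪X i, u⟫ = ⟪Z, u⟫ := by
      rw [hZdef, sum_inner]
      exact Finset.sum_congr rfl (fun i _ => (real_inner_smul_left _ _ _).symm)
    rw [he]
    calc ⟪Z, u⟫ ≤ ‖Z‖ * ‖u‖ := real_inner_le_norm Z u
      _ = ‖Z‖ := by rw [hu, mul_one]
  -- synthetic score bound
  have hM0 : (0:ℝ) < M := by exact_mod_cast hM
  have hepsS : ∀ i : Fin M, (Ys i - rho' ⟪Xs i, β₀⟫) * ⟪Xs i, u⟫ ≤ |⟪Xs i, u⟫| := by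
    intro i
    have h1 := rho'_nonneg ⟪Xs i, β₀⟫
    have h2 := rho'_le_one ⟪Xs i, β₀⟫
    have h3 : |Ys i - rho' ⟪Xs i, β₀⟫| ≤ 1 := by
      rcases hYs i with h | h <;> rw [h, abs_le] <;> constructor <;> linarith
    calc (Ys i - rho' ⟪Xs i, β₀⟫) * ⟪Xs i, u⟫
        ≤ |(Ys i - rho' ⟪Xs i, β₀⟫) * ⟪Xs i, u⟫| := le_abs_self _
      _ = |Ys i - rho' ⟪Xs i, β₀⟫| * |⟪Xs i, u⟫| := abs_mul _ _
      _ ≤ 1 * |⟪Xs i, u⟫| := mul_le_mul_of_nonneg_right h3 (abs_nonneg _)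
      _ = |⟪Xs i, u⟫| := one_mul _
  have hbs2 : ∑ i, ⟪Xs i, u⟫ ^ 2 ≤ M * Λ := by
    have h0 := hop u
    rw [hu] at h0
    calc ∑ i, ⟪Xs i, u⟫ ^ 2 = (M:ℝ) * ((M : ℝ)⁻¹ * ∑ i, ⟪Xs i, u⟫ ^ 2) := by
          field_simp
      _ ≤ (M:ℝ) * (Λ * 1 ^ 2) := mul_le_mul_of_nonneg_left h0 (le_of_lt hM0)
      _ = M * Λ := by ring
  have habs : ∑ i, |⟪Xs i, u⟫| ≤ (M:ℝ) * Real.sqrt Λ := by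
    have hcs := Finset.sum_mul_sq_le_sq_mul_sq Finset.univ (fun _ : Fin M => (1:ℝ))
      (fun i => |⟪Xs i, u⟫|)
    simp only [one_mul, one_pow, Finset.sum_const, Finset.card_univ, Fintype.card_fin,
      nsmul_eq_mul, mul_one] at hcs
    have hsq : (∑ i, |⟪Xs i, u⟫|) ^ 2 ≤ (M:ℝ) ^ 2 * Λ := by
      calc (∑ i, |⟪Xs i, u⟫|) ^ 2 ≤ (M:ℝ) * ∑ i, |⟪Xs i, u⟫| ^ 2 := hcs
        _ = (M:ℝ) * ∑ i, ⟪Xs i, u⟫ ^ 2 := by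
            rw [Finset.sum_congr rfl (fun i (_ : i ∈ Finset.univ) => sq_abs _)]
        _ ≤ (M:ℝ) * ((M:ℝ) * Λ) := mul_le_mul_of_nonneg_left hbs2 (Nat.cast_nonneg M)
        _ = (M:ℝ) ^ 2 * Λ := by ring
    have h1 : ∑ i, |⟪Xs i, u⟫| = Real.sqrt ((∑ i, |⟪Xs i, u⟫|) ^ 2) :=
      (Real.sqrt_sq (Finset.sum_nonneg fun i _ => abs_nonneg _)).symm
    rw [h1]
    calc Real.sqrt ((∑ i, |⟪Xs i, u⟫|) ^ 2) ≤ Real.sqrt ((M:ℝ) ^ 2 * Λ) :=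
          Real.sqrt_le_sqrt hsq
      _ = (M:ℝ) * Real.sqrt Λ := by
          rw [Real.sqrt_mul (sq_nonneg _), Real.sqrt_sq (Nat.cast_nonneg M)]
  have hsynbound : (τ / M) * (t * ∑ i, (Ys i - rho' ⟪Xs i, β₀⟫) * ⟪Xs i, u⟫)
      ≤ t * (τ * Real.sqrt Λ) := by
    have h1 : ∑ i, (Ys i - rho' ⟪Xs i, β₀⟫) * ⟪Xs i, u⟫ ≤ (M:ℝ) * Real.sqrt Λ :=
      le_trans (Finset.sum_le_sum fun i _ => hepsS i) habs
    have h2 : 0 ≤ t * (τ / M) := by positivity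
    have h3 := mul_le_mul_of_nonneg_left h1 h2
    calc (τ / M) * (t * ∑ i, (Ys i - rho' ⟪Xs i, β₀⟫) * ⟪Xs i, u⟫)
        = (t * (τ / M)) * ∑ i, (Ys i - rho' ⟪Xs i, β₀⟫) * ⟪Xs i, u⟫ := by ring
      _ ≤ (t * (τ / M)) * ((M:ℝ) * Real.sqrt Λ) := h3
      _ = t * (τ * Real.sqrt Λ) := by
          field_simp
  -- the good index set
  set S : Finset (Fin n) :=
    Finset.univ.filter (fun i => ⟪X i, β₀⟫ ^ 2 ≤ T₁ ∧ ⟪X i, u⟫ ^ 2 ≤ T₂) with hSdef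
  have huniv : ((1:ℝ) - ζ) * n ≤ ((Finset.univ : Finset (Fin n)).card : ℝ) := by
    rw [Finset.card_univ, Fintype.card_fin]
    nlinarith [Nat.cast_nonneg (α := ℝ) n]
  have hsuma : ∑ i, ⟪X i, β₀⟫ ^ 2 ≤ c₂ * n * C₃ ^ 2 := by
    have h0 := (hcond Finset.univ huniv β₀).2
    rw [Finset.card_univ, Fintype.card_fin] at h0
    calc ∑ i, ⟪X i, β₀⟫ ^ 2 ≤ c₂ * n * ‖β₀‖ ^ 2 := h0
      _ ≤ c₂ * n * C₃ ^ 2 := by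
          have hb2 : ‖β₀‖ ^ 2 ≤ C₃ ^ 2 := pow_le_pow_left₀ (norm_nonneg _) hβ₀ 2
          have := mul_le_mul_of_nonneg_left hb2
            (by positivity : (0:ℝ) ≤ c₂ * n)
          calc c₂ * n * ‖β₀‖ ^ 2 = c₂ * n * ‖β₀‖ ^ 2 := rfl
            _ ≤ c₂ * n * C₃ ^ 2 := by nlinarith [this]
  have hsumb : ∑ i, ⟪X i, u⟫ ^ 2 ≤ c₂ * n := by
    have h0 := (hcond Finset.univ huniv u).2
    rw [Finset.card_univ, Fintype.card_fin, hu] at h0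
    calc ∑ i, ⟪X i, u⟫ ^ 2 ≤ c₂ * n * 1 ^ 2 := h0
      _ = c₂ * n := by ring
  have hbada : ((Finset.univ.filter (fun i => T₁ < ⟪X i, β₀⟫ ^ 2)).card : ℝ) ≤ ζ * n / 2 := by
    have h0 := count_le (fun i => ⟪X i, β₀⟫ ^ 2) T₁ (c₂ * n * C₃ ^ 2)
      (fun i => sq_nonneg _) hT₁0 hsuma
    have h1 : ((Finset.univ.filter (fun i => T₁ < ⟪X i, β₀⟫ ^ 2)).card : ℝ)
        ≤ c₂ * n * C₃ ^ 2 / T₁ := by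
      rw [le_div_iff₀ hT₁0]; linarith [h0]
    have h2 : c₂ * n * C₃ ^ 2 / T₁ = ζ * n / 2 := by
      rw [hT₁def]
      field_simp
    linarith [h1, h2]
  have hbadb : ((Finset.univ.filter (fun i => T₂ < ⟪X i, u⟫ ^ 2)).card : ℝ) ≤ ζ * n / 2 := by
    have h0 := count_le (fun i => ⟪X i, u⟫ ^ 2) T₂ (c₂ * n)
      (fun i => sq_nonneg _) hT₂0 hsumb
    have h1 : ((Finset.univ.filter (fun i => T₂ < ⟪X i, u⟫ ^ 2)).card : ℝ)
        ≤ c₂ * n / T₂ := by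
      rw [le_div_iff₀ hT₂0]; linarith [h0]
    have h2 : c₂ * n / T₂ = ζ * n / 2 := by
      rw [hT₂def]
      field_simp
    linarith [h1, h2]
  have hScard : (1 - ζ) * n ≤ (S.card : ℝ) := by
    have hsplit := Finset.card_filter_add_card_filter_not
      (s := (Finset.univ : Finset (Fin n)))
      (p := fun i => ⟪X i, β₀⟫ ^ 2 ≤ T₁ ∧ ⟪X i, u⟫ ^ 2 ≤ T₂)
    have hneg : Finset.univ.filter
        (fun i => ¬(⟪X i, β₀⟫ ^ 2 ≤ T₁ ∧ ⟪X i, u⟫ ^ 2 ≤ T₂))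
        ⊆ (Finset.univ.filter (fun i => T₁ < ⟪X i, β₀⟫ ^ 2))
          ∪ (Finset.univ.filter (fun i => T₂ < ⟪X i, u⟫ ^ 2)) := by
      intro i hi
      simp only [Finset.mem_filter, Finset.mem_union, Finset.mem_univ, true_and,
        not_and_or, not_le] at hi ⊢
      exact hi
    have hnegcard : ((Finset.univ.filter
        (fun i => ¬(⟪X i, β₀⟫ ^ 2 ≤ T₁ ∧ ⟪X i, u⟫ ^ 2 ≤ T₂))).card : ℝ) ≤ ζ * n := by
      have := le_trans (Finset.card_le_card hneg) (Finset.card_union_le _ _)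
      have hcast : ((Finset.univ.filter
          (fun i => ¬(⟪X i, β₀⟫ ^ 2 ≤ T₁ ∧ ⟪X i, u⟫ ^ 2 ≤ T₂))).card : ℝ)
          ≤ ((Finset.univ.filter (fun i => T₁ < ⟪X i, β₀⟫ ^ 2)).card : ℝ)
            + ((Finset.univ.filter (fun i => T₂ < ⟪X i, u⟫ ^ 2)).card : ℝ) := by
        exact_mod_cast this
      linarith [hbada, hbadb]
    have hcast2 : (S.card : ℝ) + ((Finset.univ.filter
        (fun i => ¬(⟪X i, β₀⟫ ^ 2 ≤ T₁ ∧ ⟪X i, u⟫ ^ 2 ≤ T₂))).card : ℝ) = n := by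
      rw [hSdef]
      exact_mod_cast congrArg (Nat.cast (R := ℝ))
        (hsplit.trans (by rw [Finset.card_univ, Fintype.card_fin]))
    linarith
  -- curvature on S
  have hKKeq : KK c₂ ζ C₃ = Real.sqrt T₁ + Real.sqrt T₂ := by
    rw [hT₁def, hT₂def]; rfl
  have hcurv : ∀ i ∈ S, κ * (t * ⟪X i, u⟫) ^ 2 / 2
      ≤ rho (⟪X i, β₀⟫ + t * ⟪X i, u⟫) - rho ⟪X i, β₀⟫
        - t * ⟪X i, u⟫ * rho' ⟪X i, β₀⟫ := by
    intro i hi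
    rw [hSdef, Finset.mem_filter] at hi
    obtain ⟨-, ha, hb⟩ := hi
    have haa : |⟪X i, β₀⟫| ≤ Real.sqrt T₁ := by
      rw [← Real.sqrt_sq_eq_abs]; exact Real.sqrt_le_sqrt ha
    have hbb : |t * ⟪X i, u⟫| ≤ Real.sqrt T₂ := by
      rw [abs_mul]
      calc |t| * |⟪X i, u⟫| ≤ 1 * |⟪X i, u⟫| :=
            mul_le_mul_of_nonneg_right (abs_le.mpr ⟨by linarith, ht1⟩) (abs_nonneg _)
        _ = |⟪X i, u⟫| := one_mul _
        _ ≤ Real.sqrt T₂ := by rw [← Real.sqrt_sq_eq_abs]; exact Real.sqrt_le_sqrt hb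
    have hKge : ∀ x ∈ Set.uIcc ⟪X i, β₀⟫ (⟪X i, β₀⟫ + t * ⟪X i, u⟫), κ ≤ rho'' x := by
      intro x hx
      have haa' := abs_le.mp haa
      have hbb' := abs_le.mp hbb
      have hxb : |x| ≤ KK c₂ ζ C₃ := by
        rw [hKKeq, abs_le]
        rcases Set.mem_uIcc.mp hx with ⟨h1, h2⟩ | ⟨h1, h2⟩ <;>
          constructor <;> linarith [Real.sqrt_nonneg T₁, Real.sqrt_nonneg T₂]
      rw [hκdef]
      simpa [kap] using rho''_ge (KK c₂ ζ C₃) hxb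
    have := breg ⟪X i, β₀⟫ (t * ⟪X i, u⟫) κ hKge
    linarith
  have hslower : c₁ * ((1 - ζ) * n) ≤ ∑ i ∈ S, ⟪X i, u⟫ ^ 2 := by
    have h0 := (hcond S hScard u).1
    rw [hu] at h0
    calc c₁ * ((1 - ζ) * n) ≤ c₁ * S.card := by nlinarith [hScard]
      _ = c₁ * S.card * 1 ^ 2 := by ring
      _ ≤ _ := h0
  have hRnonneg : ∀ i : Fin n, 0 ≤ rho (⟪X i, β₀⟫ + t * ⟪X i, u⟫) - rho ⟪X i, β₀⟫
      - t * ⟪X i, u⟫ * rho' ⟪X i, β₀⟫ := fun i => by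
    have := breg_nonneg ⟪X i, β₀⟫ (t * ⟪X i, u⟫); linarith
  have hRsnonneg : 0 ≤ ∑ i, (rho (⟪Xs i, β₀⟫ + t * ⟪Xs i, u⟫) - rho ⟪Xs i, β₀⟫
      - t * ⟪Xs i, u⟫ * rho' ⟪Xs i, β₀⟫) := by
    apply Finset.sum_nonneg
    intro i _
    have := breg_nonneg ⟪Xs i, β₀⟫ (t * ⟪Xs i, u⟫); linarith
  have hRmain : κ * t ^ 2 / 2 * (c₁ * ((1 - ζ) * n))
      ≤ ∑ i, (rho (⟪X i, β₀⟫ + t * ⟪X i, u⟫) - rho ⟪X i, β₀⟫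
          - t * ⟪X i, u⟫ * rho' ⟪X i, β₀⟫) := by
    have h1 : κ * t ^ 2 / 2 * (c₁ * ((1 - ζ) * n)) ≤ κ * t ^ 2 / 2 * ∑ i ∈ S, ⟪X i, u⟫ ^ 2 :=
      mul_le_mul_of_nonneg_left hslower (by positivity)
    have h2 : κ * t ^ 2 / 2 * ∑ i ∈ S, ⟪X i, u⟫ ^ 2
        = ∑ i ∈ S, κ * (t * ⟪X i, u⟫) ^ 2 / 2 := by
      rw [Finset.mul_sum]
      exact Finset.sum_congr rfl (fun i _ => by ring)
    have h3 := Finset.sum_le_sum hcurv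
    have h4 : ∑ i ∈ S, (rho (⟪X i, β₀⟫ + t * ⟪X i, u⟫) - rho ⟪X i, β₀⟫
        - t * ⟪X i, u⟫ * rho' ⟪X i, β₀⟫)
        ≤ ∑ i, (rho (⟪X i, β₀⟫ + t * ⟪X i, u⟫) - rho ⟪X i, β₀⟫
          - t * ⟪X i, u⟫ * rho' ⟪X i, β₀⟫) :=
      Finset.sum_le_sum_of_subset_of_nonneg (Finset.filter_subset _ _)
        (fun i _ _ => hRnonneg i)
    linarith
  -- final contradiction
  have hobsscore : t * ∑ i, (Y i - rho' ⟪X i, β₀⟫) * ⟪X i, u⟫ ≤ t * ‖Z‖ :=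
    mul_le_mul_of_nonneg_left hZu (le_of_lt ht0)
  have hsyntotal : (τ / M) * (t * ∑ i, (Ys i - rho' ⟪Xs i, β₀⟫) * ⟪Xs i, u⟫
      - ∑ i, (rho (⟪Xs i, β₀⟫ + t * ⟪Xs i, u⟫) - rho ⟪Xs i, β₀⟫
          - t * ⟪Xs i, u⟫ * rho' ⟪Xs i, β₀⟫)) ≤ t * (τ * Real.sqrt Λ) := by
    have hτM : 0 ≤ τ / (M:ℝ) := by positivity
    calc (τ / M) * (t * ∑ i, (Ys i - rho' ⟪Xs i, β₀⟫) * ⟪Xs i, u⟫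
        - ∑ i, (rho (⟪Xs i, β₀⟫ + t * ⟪Xs i, u⟫) - rho ⟪Xs i, β₀⟫
          - t * ⟪Xs i, u⟫ * rho' ⟪Xs i, β₀⟫))
        ≤ (τ / M) * (t * ∑ i, (Ys i - rho' ⟪Xs i, β₀⟫) * ⟪Xs i, u⟫) :=
          mul_le_mul_of_nonneg_left (by linarith [hRsnonneg]) hτM
      _ ≤ t * (τ * Real.sqrt Λ) := hsynbound
  have hkey2 : t * (‖Z‖ + τ * Real.sqrt Λ) < t * (c₁ * κ * (1 - ζ) / 2 * t * n) :=
    mul_lt_mul_of_pos_left key ht0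
  have hfinal : mapObj τ X Y Xs Ys (β₀ + t • u) - mapObj τ X Y Xs Ys β₀ < 0 := by
    have heq : t * (c₁ * κ * (1 - ζ) / 2 * t * n) = κ * t ^ 2 / 2 * (c₁ * ((1 - ζ) * n)) := by
      ring
    rw [hdiff]
    linarith [hobsscore, hsyntotal, hRmain, hkey2, heq]
  linarith [stepA, hfinal]

lemma continuous_rho' : Continuous rho' := by
  apply Real.continuous_exp.div (continuous_const.add Real.continuous_exp)
  intro x
  exact ne_of_gt (one_add_exp_pos x)

lemma meas_coord {p : ℕ} (k : Fin p) : Measurable (fun v : EuclideanSpace ℝ (Fin p) => v k) :=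
  (EuclideanSpace.proj k).continuous.measurable

lemma coord_le_norm {p : ℕ} (x : EuclideanSpace ℝ (Fin p)) (k : Fin p) : |x k| ≤ ‖x‖ := by
  rw [EuclideanSpace.norm_eq, ← Real.sqrt_sq_eq_abs]
  apply Real.sqrt_le_sqrt
  have : x k ^ 2 = ‖x k‖ ^ 2 := by rw [Real.norm_eq_abs, sq_abs]
  rw [this]
  exact Finset.single_le_sum (f := fun i => ‖x i‖ ^ 2) (fun i _ => sq_nonneg _)
    (Finset.mem_univ k)

lemma score_L2 {Ω : Type*} [MeasurableSpace Ω] (μ : Measure Ω) [IsProbabilityMeasure μ]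
    {n p : ℕ} (X : Fin n → Ω → EuclideanSpace ℝ (Fin p)) (Y : Fin n → Ω → ℝ)
    (β₀ : EuclideanSpace ℝ (Fin p)) (C₂ : ℝ) (hC₂p : 0 ≤ C₂ * p)
    (hmeasX : ∀ i, Measurable (X i)) (hmeasY : ∀ i, Measurable (Y i))
    (hindep : iIndepFun (fun i ω => (X i ω, Y i ω)) μ)
    (hYbin : ∀ i, ∀ᵐ ω ∂μ, Y i ω = 0 ∨ Y i ω = 1)
    (hBern : ∀ i, μ[Y i | MeasurableSpace.comap (X i) inferInstance]
        =ᵐ[μ] fun ω => rho' ⟪X i ω, β₀⟫)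
    (hmom : ∀ i, ∫⁻ ω, (‖X i ω‖₊ : ℝ≥0∞) ^ 2 ∂μ ≤ ENNReal.ofReal (C₂ * p)) :
    Integrable (fun ω => ‖∑ i, (Y i ω - rho' ⟪X i ω, β₀⟫) • X i ω‖ ^ 2) μ ∧
      ∫ ω, ‖∑ i, (Y i ω - rho' ⟪X i ω, β₀⟫) • X i ω‖ ^ 2 ∂μ ≤ C₂ * p * n := by
  classical
  set W : Fin n → Ω → EuclideanSpace ℝ (Fin p) :=
    fun i ω => (Y i ω - rho' ⟪X i ω, β₀⟫) • X i ω with hWdef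
  have hmeasinner : ∀ i, Measurable (fun ω => ⟪X i ω, β₀⟫) := fun i =>
    (Continuous.inner continuous_id continuous_const).measurable.comp (hmeasX i)
  have hmeasW : ∀ i, Measurable (W i) := fun i =>
    ((hmeasY i).sub (continuous_rho'.measurable.comp (hmeasinner i))).smul (hmeasX i)
  have hXsq_int : ∀ i, Integrable (fun ω => ‖X i ω‖ ^ 2) μ := by
    intro i
    refine ⟨((hmeasX i).norm.pow_const 2).aestronglyMeasurable, ?_⟩
    show (∫⁻ ω, (‖(‖X i ω‖ ^ 2 : ℝ)‖₊ : ℝ≥0∞) ∂μ) < ⊤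
    have he : ∀ ω : Ω, (‖(‖X i ω‖ ^ 2 : ℝ)‖₊ : ℝ≥0∞) = (‖X i ω‖₊ : ℝ≥0∞) ^ 2 := by
      intro ω
      rw [nnnorm_pow, nnnorm_norm]
      push_cast
      ring
    calc ∫⁻ ω, (‖(‖X i ω‖ ^ 2 : ℝ)‖₊ : ℝ≥0∞) ∂μ = ∫⁻ ω, (‖X i ω‖₊ : ℝ≥0∞) ^ 2 ∂μ :=
          lintegral_congr he
      _ ≤ ENNReal.ofReal (C₂ * p) := hmom i
      _ < ⊤ := ENNReal.ofReal_lt_top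
  have hXsq_val : ∀ i, ∫ ω, ‖X i ω‖ ^ 2 ∂μ ≤ C₂ * p := by
    intro i
    have h1 : ∫ ω, ‖X i ω‖ ^ 2 ∂μ = (∫⁻ ω, (‖X i ω‖₊ : ℝ≥0∞) ^ 2 ∂μ).toReal := by
      rw [integral_eq_lintegral_of_nonneg_ae (Filter.Eventually.of_forall fun ω => sq_nonneg _)
        ((hmeasX i).norm.pow_const 2).aestronglyMeasurable]
      congr 1
      apply lintegral_congr
      intro ω
      rw [ENNReal.ofReal_pow (norm_nonneg _), ofReal_norm, enorm_eq_nnnorm]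
    rw [h1]
    exact ENNReal.toReal_le_of_le_ofReal hC₂p (hmom i)
  have hXn_int : ∀ i, Integrable (fun ω => ‖X i ω‖) μ := by
    intro i
    refine Integrable.mono' ((integrable_const 1).add (hXsq_int i))
      (hmeasX i).norm.aestronglyMeasurable ?_
    refine Filter.Eventually.of_forall fun ω => ?_
    rw [norm_norm]
    have h := norm_nonneg (X i ω)
    simp only [Pi.add_apply]
    nlinarith [sq_nonneg (‖X i ω‖ - 1)]
  have hεbd : ∀ i, ∀ᵐ ω ∂μ, |Y i ω - rho' ⟪X i ω, β₀⟫| ≤ 1 := by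
    intro i
    filter_upwards [hYbin i] with ω hω
    have h1 := rho'_nonneg ⟪X i ω, β₀⟫
    have h2 := rho'_le_one ⟪X i ω, β₀⟫
    rcases hω with h | h <;> rw [h, abs_le] <;> constructor <;> linarith
  -- coordinates of W are integrable with zero mean
  have hWk_int : ∀ i k, Integrable (fun ω => W i ω k) μ := by
    intro i k
    refine Integrable.mono' (hXn_int i)
      (show Measurable (fun ω => W i ω k) from (meas_coord k).comp (hmeasW i)).aestronglyMeasurable ?_
    filter_upwards [hεbd i] with ω hω
    rw [Real.norm_eq_abs]
    have h1 : W i ω k = (Y i ω - rho' ⟪X i ω, β₀⟫) * X i ω k := rfl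
    rw [h1, abs_mul]
    calc |Y i ω - rho' ⟪X i ω, β₀⟫| * |X i ω k| ≤ 1 * |X i ω k| :=
          mul_le_mul_of_nonneg_right hω (abs_nonneg _)
      _ = |X i ω k| := one_mul _
      _ ≤ ‖X i ω‖ := coord_le_norm _ k
  -- zero mean coordinates
  have hW0 : ∀ i k, ∫ ω, W i ω k ∂μ = 0 := by
    intro i k
    have hm : MeasurableSpace.comap (X i) inferInstance
        ≤ (inferInstance : MeasurableSpace Ω) := (hmeasX i).comap_le
    have hXm : Measurable[MeasurableSpace.comap (X i) inferInstance] (X i) :=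
      measurable_iff_comap_le.mpr le_rfl
    have hev : Measurable (fun v : EuclideanSpace ℝ (Fin p) => v k) :=
      meas_coord k
    have hg : StronglyMeasurable[MeasurableSpace.comap (X i) inferInstance]
        (fun ω => X i ω k) :=
      (hev.comp hXm).stronglyMeasurable
    have hYint : Integrable (Y i) μ := by
      refine Integrable.mono' (integrable_const 1) (hmeasY i).aestronglyMeasurable ?_
      filter_upwards [hYbin i] with ω hω
      rcases hω with h | h <;> rw [h] <;> simp
    have hfg_int : Integrable ((fun ω => X i ω k) * Y i) μ := by
      refine Integrable.mono' (hXn_int i)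
        ((show Measurable (fun ω => X i ω k) from (meas_coord k).comp (hmeasX i)).mul (hmeasY i)).aestronglyMeasurable ?_
      filter_upwards [hYbin i] with ω hω
      simp only [Pi.mul_apply]
      rw [Real.norm_eq_abs, abs_mul]
      have h2 : |X i ω k| ≤ ‖X i ω‖ := coord_le_norm _ k
      have h3 : |Y i ω| ≤ 1 := by rcases hω with h | h <;> rw [h] <;> simp
      nlinarith [abs_nonneg (X i ω k), abs_nonneg (Y i ω), norm_nonneg (X i ω)]
    have hgρ_int : Integrable (fun ω => X i ω k * rho' ⟪X i ω, β₀⟫) μ := by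
      refine Integrable.mono' (hXn_int i)
        ((show Measurable (fun ω => X i ω k) from (meas_coord k).comp (hmeasX i)).mul
          (continuous_rho'.measurable.comp (hmeasinner i))).aestronglyMeasurable ?_
      refine Filter.Eventually.of_forall fun ω => ?_
      rw [Real.norm_eq_abs, abs_mul]
      have h2 : |X i ω k| ≤ ‖X i ω‖ := coord_le_norm _ k
      have h3 : |rho' ⟪X i ω, β₀⟫| ≤ 1 := by
        rw [abs_le]
        exact ⟨by linarith [rho'_nonneg ⟪X i ω, β₀⟫], rho'_le_one _⟩
      nlinarith [abs_nonneg (X i ω k), abs_nonneg (rho' ⟪X i ω, β₀⟫), norm_nonneg (X i ω)]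
    have hpull := condExp_mul_of_stronglyMeasurable_left hg hfg_int hYint
    have hsplit : (fun ω => W i ω k)
        = fun ω => X i ω k * Y i ω - X i ω k * rho' ⟪X i ω, β₀⟫ := by
      funext ω
      have h1 : W i ω k = (Y i ω - rho' ⟪X i ω, β₀⟫) * X i ω k := rfl
      rw [h1]; ring
    have h2 : ∫ ω, X i ω k * Y i ω ∂μ = ∫ ω, X i ω k * rho' ⟪X i ω, β₀⟫ ∂μ := by
      calc ∫ ω, X i ω k * Y i ω ∂μ = ∫ ω, ((fun ω => X i ω k) * Y i) ω ∂μ := rfl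
        _ = ∫ ω, (μ[(fun ω => X i ω k) * Y i|MeasurableSpace.comap (X i) inferInstance]) ω ∂μ :=
            (integral_condExp (f := (fun ω => X i ω k) * Y i) hm).symm
        _ = ∫ ω, ((fun ω => X i ω k)
            * μ[Y i|MeasurableSpace.comap (X i) inferInstance]) ω ∂μ :=
            integral_congr_ae hpull
        _ = ∫ ω, X i ω k * rho' ⟪X i ω, β₀⟫ ∂μ := by
            refine integral_congr_ae ?_
            filter_upwards [hBern i] with ω hω
            simp only [Pi.mul_apply]
            rw [hω]
    rw [hsplit, integral_sub (by exact hfg_int) hgρ_int, h2, sub_self]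
  -- independence of coordinates
  have hφmeas : ∀ k : Fin p, Measurable (fun q : EuclideanSpace ℝ (Fin p) × ℝ =>
      (q.2 - rho' ⟪q.1, β₀⟫) * q.1 k) := by
    intro k
    apply Measurable.mul
    · exact measurable_snd.sub (continuous_rho'.measurable.comp
        ((Continuous.inner continuous_id continuous_const).measurable.comp measurable_fst))
    · exact (meas_coord k).comp measurable_fst
  have hindep_coord : ∀ i j, i ≠ j → ∀ k,
      IndepFun (fun ω => W i ω k) (fun ω => W j ω k) μ := by
    intro i j hij k
    have hWeq : ∀ (l : Fin n), (fun ω => W l ω k)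
        = (fun q : EuclideanSpace ℝ (Fin p) × ℝ => (q.2 - rho' ⟪q.1, β₀⟫) * q.1 k)
          ∘ (fun ω => (X l ω, Y l ω)) := fun l => funext fun ω => rfl
    rw [hWeq i, hWeq j]
    exact (hindep.indepFun hij).comp (hφmeas k) (hφmeas k)
  have hcross : ∀ i j, i ≠ j → Integrable (fun ω => ⟪W i ω, W j ω⟫) μ
      ∧ ∫ ω, ⟪W i ω, W j ω⟫ ∂μ = 0 := by
    intro i j hij
    have hinner_eq : (fun ω => ⟪W i ω, W j ω⟫) = fun ω => ∑ k, W i ω k * W j ω k := by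
      funext ω
      rw [PiLp.inner_apply]
      exact Finset.sum_congr rfl fun k _ => by
        simp [RCLike.inner_apply, conj_trivial, mul_comm]
    have hprod_int : ∀ k : Fin p, Integrable (fun ω => W i ω k * W j ω k) μ := fun k =>
      (hindep_coord i j hij k).integrable_mul (hWk_int i k) (hWk_int j k)
    have hprod_zero : ∀ k : Fin p, ∫ ω, W i ω k * W j ω k ∂μ = 0 := fun k => by
      have h5 := (hindep_coord i j hij k).integral_mul_eq_mul_integral
        (hWk_int i k).aestronglyMeasurable (hWk_int j k).aestronglyMeasurable
      calc ∫ ω, W i ω k * W j ω k ∂μ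
          = ∫ ω, ((fun ω => W i ω k) * (fun ω => W j ω k)) ω ∂μ := rfl
        _ = (∫ ω, W i ω k ∂μ) * ∫ ω, W j ω k ∂μ := h5
        _ = 0 := by rw [hW0 i k, zero_mul]
    constructor
    · rw [hinner_eq]
      exact integrable_finset_sum _ (fun k _ => hprod_int k)
    · rw [hinner_eq, integral_finset_sum _ (fun k _ => hprod_int k)]
      simp [hprod_zero]
  -- diagonal terms
  have hdiag : ∀ i, Integrable (fun ω => ⟪W i ω, W i ω⟫) μ
      ∧ ∫ ω, ⟪W i ω, W i ω⟫ ∂μ ≤ C₂ * p := by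
    intro i
    have hbd : ∀ᵐ ω ∂μ, ⟪W i ω, W i ω⟫ ≤ ‖X i ω‖ ^ 2 ∧ 0 ≤ ⟪W i ω, W i ω⟫ := by
      filter_upwards [hεbd i] with ω hω
      have h1 : ⟪W i ω, W i ω⟫ = ‖W i ω‖ ^ 2 := real_inner_self_eq_norm_sq _
      have h2 : ‖W i ω‖ = |Y i ω - rho' ⟪X i ω, β₀⟫| * ‖X i ω‖ := by
        have h3 : W i ω = (Y i ω - rho' ⟪X i ω, β₀⟫) • X i ω := rfl
        rw [h3, norm_smul, Real.norm_eq_abs]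
      constructor
      · rw [h1, h2, mul_pow]
        have h4 : |Y i ω - rho' ⟪X i ω, β₀⟫| ^ 2 ≤ 1 := pow_le_one₀ (abs_nonneg _) hω
        nlinarith [h4, sq_nonneg (‖X i ω‖)]
      · rw [h1]; positivity
    have hint : Integrable (fun ω => ⟪W i ω, W i ω⟫) μ := by
      refine Integrable.mono' (hXsq_int i)
        ((hmeasW i).inner (hmeasW i)).aestronglyMeasurable ?_
      filter_upwards [hbd] with ω hω
      rw [Real.norm_eq_abs, abs_of_nonneg hω.2]
      exact hω.1
    refine ⟨hint, ?_⟩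
    calc ∫ ω, ⟪W i ω, W i ω⟫ ∂μ ≤ ∫ ω, ‖X i ω‖ ^ 2 ∂μ :=
          integral_mono_ae hint (hXsq_int i) (hbd.mono fun ω hω => hω.1)
      _ ≤ C₂ * p := hXsq_val i
  -- assemble
  have hnorm_eq : (fun ω => ‖∑ i, W i ω‖ ^ 2) = fun ω => ∑ i, ∑ j, ⟪W i ω, W j ω⟫ := by
    funext ω
    rw [← real_inner_self_eq_norm_sq, sum_inner]
    exact Finset.sum_congr rfl fun i _ => inner_sum _ _ _
  have hterm_int : ∀ (i j : Fin n), Integrable (fun ω => ⟪W i ω, W j ω⟫) μ := by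
    intro i j
    by_cases hij : i = j
    · subst hij; exact (hdiag i).1
    · exact (hcross i j hij).1
  have hint_total : Integrable (fun ω => ‖∑ i, W i ω‖ ^ 2) μ := by
    rw [hnorm_eq]
    exact integrable_finset_sum _ (fun i _ =>
      integrable_finset_sum _ (fun j _ => hterm_int i j))
  refine ⟨hint_total, ?_⟩
  have hval : ∫ ω, ‖∑ i, W i ω‖ ^ 2 ∂μ = ∑ i : Fin n, ∫ ω, ⟪W i ω, W i ω⟫ ∂μ := by
    rw [hnorm_eq, integral_finset_sum _ (fun i _ =>
      integrable_finset_sum _ (fun j _ => hterm_int i j))]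
    refine Finset.sum_congr rfl fun i _ => ?_
    rw [integral_finset_sum _ (fun j _ => hterm_int i j)]
    refine Finset.sum_eq_single i (fun j _ hji => (hcross i j (fun h => hji h.symm)).2)
      (fun h => absurd (Finset.mem_univ i) h)
  rw [hval]
  calc ∑ i : Fin n, ∫ ω, ⟪W i ω, W i ω⟫ ∂μ ≤ ∑ _i : Fin n, C₂ * p :=
        Finset.sum_le_sum (fun i _ => (hdiag i).2)
    _ = C₂ * p * n := by
        rw [Finset.sum_const, Finset.card_univ, Fintype.card_fin, nsmul_eq_mul]
        ring

/-- **Consistency of the MAP estimator when `p/n → 0`** (Theorem 3(i) of the paper).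
Under Conditions 2–4 on the observed data and true coefficients, a bounded synthetic
second-moment matrix, and tuning parameter `0 < τ ≤ C₄ p`, the MAP estimator
satisfies `‖β̂_M − β₀‖² = O_p(p/n)`. -/
theorem stmt7 {Ω : Type*} [MeasurableSpace Ω] (μ : Measure Ω) [IsProbabilityMeasure μ]
    (p M : ℕ → ℕ) (τ : ℕ → ℝ) (hM : ∀ n, 1 ≤ M n)
    (hpn : Tendsto (fun n => (p n : ℝ) / n) atTop (nhds 0))
    (C₂ C₃ C₄ Λ c₁ c₂ ζ : ℝ)
    (hC₂ : 0 < C₂) (hC₃ : 0 < C₃) (hC₄ : 0 < C₄) (hΛ : 0 < Λ)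
    (hc₁ : 0 < c₁) (hc₂ : 0 < c₂) (hζ0 : 0 < ζ) (hζ1 : ζ < 1)
    (X : (n : ℕ) → Fin n → Ω → EuclideanSpace ℝ (Fin (p n)))
    (Y : (n : ℕ) → Fin n → Ω → ℝ)
    (β₀ : (n : ℕ) → EuclideanSpace ℝ (Fin (p n)))
    (Xs : (n : ℕ) → Fin (M n) → EuclideanSpace ℝ (Fin (p n)))
    (Ys : (n : ℕ) → Fin (M n) → ℝ)
    (βhat : (n : ℕ) → Ω → EuclideanSpace ℝ (Fin (p n)))
    (hmeasX : ∀ n i, Measurable (X n i)) (hmeasY : ∀ n i, Measurable (Y n i))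
    -- observed pairs are independent across `i`
    (hindep : ∀ n, iIndepFun
        (fun i ω => (X n i ω, Y n i ω)) μ)
    -- responses are binary with `Y_i | X_i ~ Bernoulli(ρ'(⟨X_i, β₀⟩))`
    (hYbin : ∀ n i, ∀ᵐ ω ∂μ, Y n i ω = 0 ∨ Y n i ω = 1)
    (hBern : ∀ n i,
      μ[Y n i | MeasurableSpace.comap (X n i) inferInstance]
        =ᵐ[μ] fun ω => rho' ⟪X n i ω, β₀ n⟫)
    -- Condition 4: bounded true signal
    (hβ₀ : ∀ n, ‖β₀ n‖ ≤ C₃)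
    -- Condition 2: second-moment bound on the covariates
    (hmom : ∀ n i, ∫⁻ ω, (‖X n i ω‖₊ : ℝ≥0∞) ^ 2 ∂μ ≤ ENNReal.ofReal (C₂ * p n))
    -- Condition 3: uniform restricted eigenvalue condition, almost surely
    (hcond3 : ∀ᵐ ω ∂μ, ∃ N₀ : ℕ, ∀ n, N₀ < n → ∀ S : Finset (Fin n),
        (1 - ζ) * n ≤ S.card → ∀ v : EuclideanSpace ℝ (Fin (p n)),
          c₁ * S.card * ‖v‖ ^ 2 ≤ ∑ i ∈ S, ⟪X n i ω, v⟫ ^ 2 ∧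
            ∑ i ∈ S, ⟪X n i ω, v⟫ ^ 2 ≤ c₂ * S.card * ‖v‖ ^ 2)
    -- synthetic data are binary with a bounded second-moment matrix
    (hYsbin : ∀ n i, Ys n i = 0 ∨ Ys n i = 1)
    (hop : ∀ n (v : EuclideanSpace ℝ (Fin (p n))),
      (M n : ℝ)⁻¹ * ∑ i, ⟪Xs n i, v⟫ ^ 2 ≤ Λ * ‖v‖ ^ 2)
    -- tuning parameter: `0 < τ ≤ C₄ p`
    (hτpos : ∀ n, 0 < τ n) (hτub : ∀ n, τ n ≤ C₄ * p n)
    -- `βhat n` is a MAP estimator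
    (hmax : ∀ n, ∀ᵐ ω ∂μ, ∀ β : EuclideanSpace ℝ (Fin (p n)),
      mapObj (τ n) (fun i => X n i ω) (fun i => Y n i ω) (Xs n) (Ys n) β
        ≤ mapObj (τ n) (fun i => X n i ω) (fun i => Y n i ω) (Xs n) (Ys n) (βhat n ω)) :
    ∀ ε : ℝ, 0 < ε → ∃ (B : ℝ) (N : ℕ), ∀ n, N ≤ n →
      μ {ω | B * (p n : ℝ) / n < ‖βhat n ω - β₀ n‖ ^ 2} ≤ ENNReal.ofReal ε := by

  intro ε hε
  -- the good event for Condition 3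
  set G : ℕ → Set Ω := fun k => ⋂ (n : ℕ) (_ : k < n),
    {ω | ∀ S : Finset (Fin n), (1 - ζ) * n ≤ S.card →
      ∀ v : EuclideanSpace ℝ (Fin (p n)),
        c₁ * S.card * ‖v‖ ^ 2 ≤ ∑ i ∈ S, ⟪X n i ω, v⟫ ^ 2 ∧
          ∑ i ∈ S, ⟪X n i ω, v⟫ ^ 2 ≤ c₂ * S.card * ‖v‖ ^ 2} with hGdef
  have hGmeas : ∀ k, MeasurableSet (G k) := by
    intro k
    apply MeasurableSet.iInter
    intro n
    apply MeasurableSet.iInter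
    intro _
    have hpre : {ω | ∀ S : Finset (Fin n), (1 - ζ) * n ≤ S.card →
        ∀ v : EuclideanSpace ℝ (Fin (p n)),
          c₁ * S.card * ‖v‖ ^ 2 ≤ ∑ i ∈ S, ⟪X n i ω, v⟫ ^ 2 ∧
            ∑ i ∈ S, ⟪X n i ω, v⟫ ^ 2 ≤ c₂ * S.card * ‖v‖ ^ 2}
        = (fun ω => fun i : Fin n => X n i ω) ⁻¹'
          {x : Fin n → EuclideanSpace ℝ (Fin (p n)) |
            ∀ S : Finset (Fin n), (1 - ζ) * n ≤ S.card →
            ∀ v : EuclideanSpace ℝ (Fin (p n)),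
              c₁ * S.card * ‖v‖ ^ 2 ≤ ∑ i ∈ S, ⟪x i, v⟫ ^ 2 ∧
                ∑ i ∈ S, ⟪x i, v⟫ ^ 2 ≤ c₂ * S.card * ‖v‖ ^ 2} := rfl
    rw [hpre]
    have hclosed : IsClosed {x : Fin n → EuclideanSpace ℝ (Fin (p n)) |
        ∀ S : Finset (Fin n), (1 - ζ) * n ≤ S.card →
        ∀ v : EuclideanSpace ℝ (Fin (p n)),
          c₁ * S.card * ‖v‖ ^ 2 ≤ ∑ i ∈ S, ⟪x i, v⟫ ^ 2 ∧
            ∑ i ∈ S, ⟪x i, v⟫ ^ 2 ≤ c₂ * S.card * ‖v‖ ^ 2} := by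
      have heq : {x : Fin n → EuclideanSpace ℝ (Fin (p n)) |
          ∀ S : Finset (Fin n), (1 - ζ) * n ≤ S.card →
          ∀ v : EuclideanSpace ℝ (Fin (p n)),
            c₁ * S.card * ‖v‖ ^ 2 ≤ ∑ i ∈ S, ⟪x i, v⟫ ^ 2 ∧
              ∑ i ∈ S, ⟪x i, v⟫ ^ 2 ≤ c₂ * S.card * ‖v‖ ^ 2}
          = ⋂ (S : Finset (Fin n)) (_ : (1 - ζ) * n ≤ S.card)
              (v : EuclideanSpace ℝ (Fin (p n))),
              ({x : Fin n → EuclideanSpace ℝ (Fin (p n)) |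
                  c₁ * S.card * ‖v‖ ^ 2 ≤ ∑ i ∈ S, ⟪x i, v⟫ ^ 2}
                ∩ {x : Fin n → EuclideanSpace ℝ (Fin (p n)) |
                  ∑ i ∈ S, ⟪x i, v⟫ ^ 2 ≤ c₂ * S.card * ‖v‖ ^ 2}) := by
        ext x
        simp only [Set.mem_setOf_eq, Set.mem_iInter, Set.mem_inter_iff]
      rw [heq]
      apply isClosed_iInter
      intro S
      apply isClosed_iInter
      intro _
      apply isClosed_iInter
      intro v
      have hcont : Continuous fun x : Fin n → EuclideanSpace ℝ (Fin (p n)) =>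
          ∑ i ∈ S, ⟪x i, v⟫ ^ 2 :=
        continuous_finset_sum S (fun i _ =>
          (Continuous.inner (continuous_apply i) continuous_const).pow 2)
      exact (isClosed_le continuous_const hcont).inter (isClosed_le hcont continuous_const)
    exact (measurable_pi_lambda _ (fun i => hmeasX n i)) hclosed.measurableSet
  have hGmono : Monotone G := by
    intro k k' hkk ω hω
    simp only [hGdef, Set.mem_iInter] at hω ⊢
    exact fun n hn => hω n (lt_of_le_of_lt hkk hn)
  have hGae : ∀ᵐ ω ∂μ, ω ∈ ⋃ k, G k := by
    filter_upwards [hcond3] with ω hω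
    obtain ⟨N₀, hN₀⟩ := hω
    refine Set.mem_iUnion.mpr ⟨N₀, ?_⟩
    simp only [hGdef, Set.mem_iInter]
    exact fun n hn => hN₀ n hn
  have hGone : μ (⋃ k, G k) = 1 := by
    rw [← measure_univ (μ := μ)]
    apply measure_congr
    rw [Filter.eventuallyEq_set]
    filter_upwards [hGae] with ω hω
    simp [hω]
  -- choose k with μ (G k)ᶜ ≤ ε/2
  obtain ⟨k, hk⟩ : ∃ k, μ (G k)ᶜ ≤ ENNReal.ofReal (ε / 2) := by
    have htend : Tendsto (fun k => μ (G k)) atTop (nhds 1) := by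
      have := tendsto_measure_iUnion_atTop (μ := μ) hGmono
      rwa [hGone] at this
    rcases le_or_gt 1 (ENNReal.ofReal (ε / 2)) with h1 | h1
    · exact ⟨0, le_trans (prob_le_one) h1⟩
    · have h2 : (0:ℝ≥0∞) < ENNReal.ofReal (ε / 2) := by
        rw [ENNReal.ofReal_pos]; linarith
      have h3 : (1:ℝ≥0∞) - ENNReal.ofReal (ε / 2) < 1 :=
        ENNReal.sub_lt_self ENNReal.one_ne_top one_ne_zero (ne_of_gt h2)
      have h4 := htend.eventually (eventually_gt_nhds h3)
      obtain ⟨k, hk⟩ := h4.exists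
      refine ⟨k, ?_⟩
      rw [prob_compl_eq_one_sub (hGmeas k)]
      rw [tsub_le_iff_right]
      calc (1:ℝ≥0∞) = (1 - ENNReal.ofReal (ε / 2)) + ENNReal.ofReal (ε / 2) := by
            rw [tsub_add_cancel_of_le h1.le]
        _ ≤ ENNReal.ofReal (ε / 2) + μ (G k) := by
            rw [add_comm]
            exact add_le_add le_rfl (le_of_lt hk)
  -- constants
  set κ : ℝ := kap c₂ ζ C₃ with hκdef
  have hκ0 : 0 < κ := kap_pos c₂ ζ C₃
  set cc : ℝ := c₁ * κ * (1 - ζ) / 2 with hccdef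
  have h1ζ : 0 < 1 - ζ := by linarith
  have hcc0 : 0 < cc := by rw [hccdef]; positivity
  set B : ℝ := ((Real.sqrt (2 * C₂ / ε) + C₄ * Real.sqrt Λ) / cc + 1) ^ 2 with hBdef
  have hBbase : 0 < (Real.sqrt (2 * C₂ / ε) + C₄ * Real.sqrt Λ) / cc + 1 := by
    have hnum : 0 ≤ Real.sqrt (2 * C₂ / ε) + C₄ * Real.sqrt Λ := by positivity
    have := div_nonneg hnum hcc0.le
    linarith
  have hB0 : 0 < B := by rw [hBdef]; exact pow_pos hBbase 2
  -- choose N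
  have hδ : (0:ℝ) < min (1 / B) 1 := lt_min (by positivity) one_pos
  have hev : ∀ᶠ n in atTop, (p n : ℝ) / n < min (1 / B) 1 :=
    hpn.eventually (eventually_lt_nhds hδ)
  obtain ⟨N₁, hN₁⟩ := eventually_atTop.mp hev
  refine ⟨B, max (max N₁ (k + 1)) 1, ?_⟩
  intro n hn
  have hn1 : 1 ≤ n := le_trans (le_max_right _ 1) hn
  have hnk : k < n :=
    lt_of_lt_of_le (Nat.lt_succ_self k)
      (le_trans (le_trans (le_max_right N₁ (k + 1)) (le_max_left _ 1)) hn)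
  have hNn : N₁ ≤ n := le_trans (le_trans (le_max_left N₁ (k + 1)) (le_max_left _ 1)) hn
  have hratio := hN₁ n hNn
  by_cases hp0 : p n = 0
  · have hzero : ∀ ω, ‖βhat n ω - β₀ n‖ = 0 := by
      intro ω
      haveI : IsEmpty (Fin (p n)) := by rw [hp0]; exact Fin.isEmpty
      rw [EuclideanSpace.norm_eq, Finset.univ_eq_empty, Finset.sum_empty, Real.sqrt_zero]
    have hsetempty : {ω | B * (p n : ℝ) / n < ‖βhat n ω - β₀ n‖ ^ 2} = (∅ : Set Ω) := by
      ext ω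
      simp only [Set.mem_setOf_eq, Set.mem_empty_iff_false, iff_false, not_lt, hzero ω, hp0]
      norm_num
    rw [hsetempty]
    simp
  · have hp1 : (1:ℝ) ≤ p n := by
      exact_mod_cast Nat.one_le_iff_ne_zero.mpr hp0
    have hnR : (1:ℝ) ≤ n := by exact_mod_cast hn1
    have hnR0 : (0:ℝ) < n := by linarith
    have hpR0 : (0:ℝ) < p n := by linarith
    have hplen : (p n : ℝ) ≤ n := by
      have h5 := lt_of_lt_of_le hratio (min_le_right _ _)
      calc (p n : ℝ) = (p n : ℝ) / n * n := by field_simp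
        _ ≤ 1 * n := mul_le_mul_of_nonneg_right h5.le hnR0.le
        _ = (n:ℝ) := one_mul (n:ℝ)
    have hBp1 : B * (p n : ℝ) / n ≤ 1 := by
      have h6 := lt_of_lt_of_le hratio (min_le_left _ _)
      calc B * (p n : ℝ) / n = B * ((p n : ℝ) / n) := by ring
        _ ≤ B * (1 / B) := mul_le_mul_of_nonneg_left h6.le hB0.le
        _ = 1 := by field_simp
    set t : ℝ := Real.sqrt (B * (p n : ℝ) / n) with htdef
    have ht0 : 0 < t := Real.sqrt_pos.mpr (by positivity)
    have ht1 : t ≤ 1 := by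
      rw [htdef, show (1:ℝ) = Real.sqrt 1 by simp]
      exact Real.sqrt_le_sqrt (by simpa using hBp1)
    have htsq : t ^ 2 = B * (p n : ℝ) / n := Real.sq_sqrt (by positivity)
    set Kn : ℝ := 2 * C₂ * (p n : ℝ) * n / ε with hKndef
    have hKn0 : 0 < Kn := by rw [hKndef]; positivity
    set Zf : Ω → ℝ :=
      fun ω => ‖∑ i, (Y n i ω - rho' ⟪X n i ω, β₀ n⟫) • X n i ω‖ ^ 2 with hZfdef
    have hscore := score_L2 μ (X n) (Y n) (β₀ n) C₂ (by positivity) (hmeasX n) (hmeasY n)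
      (hindep n) (hYbin n) (hBern n) (hmom n)
    have hMarkov : μ {ω | Kn ≤ Zf ω} ≤ ENNReal.ofReal (ε / 2) := by
      have h7 := mul_meas_ge_le_integral_of_nonneg
        (Filter.Eventually.of_forall fun ω => sq_nonneg
          ‖∑ i, (Y n i ω - rho' ⟪X n i ω, β₀ n⟫) • X n i ω‖) hscore.1 Kn
      have h9 : (μ {ω | Kn ≤ Zf ω}).toReal ≤ C₂ * (p n : ℝ) * n / Kn := by
        rw [le_div_iff₀ hKn0]
        calc (μ {ω | Kn ≤ Zf ω}).toReal * Kn
            = Kn * (μ {ω | Kn ≤ Zf ω}).toReal := by ring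
          _ ≤ ∫ ω, Zf ω ∂μ := h7
          _ ≤ C₂ * (p n : ℝ) * n := hscore.2
      have h10 : C₂ * (p n : ℝ) * n / Kn = ε / 2 := by
        rw [hKndef]
        field_simp
      rw [← ENNReal.ofReal_toReal (measure_ne_top μ _)]
      exact ENNReal.ofReal_le_ofReal (by linarith)
    set bad : Set Ω := {ω | ¬ ∀ β : EuclideanSpace ℝ (Fin (p n)),
        mapObj (τ n) (fun i => X n i ω) (fun i => Y n i ω) (Xs n) (Ys n) β
          ≤ mapObj (τ n) (fun i => X n i ω) (fun i => Y n i ω) (Xs n) (Ys n) (βhat n ω)}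
      with hbaddef
    have hbad0 : μ bad = 0 := by
      rw [hbaddef]
      exact (hmax n)
    have hincl : {ω | B * (p n : ℝ) / n < ‖βhat n ω - β₀ n‖ ^ 2}
        ⊆ ((G k)ᶜ ∪ {ω | Kn ≤ Zf ω}) ∪ bad := by
      intro ω hω
      by_contra hnot
      simp only [Set.mem_union, Set.mem_compl_iff, Set.mem_setOf_eq, hbaddef, not_or,
        not_not, not_le] at hnot
      obtain ⟨⟨hGk, hZsmall⟩, hmaxω⟩ := hnot
      have hcondn : ∀ S : Finset (Fin n), (1 - ζ) * n ≤ S.card →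
          ∀ v : EuclideanSpace ℝ (Fin (p n)),
            c₁ * S.card * ‖v‖ ^ 2 ≤ ∑ i ∈ S, ⟪X n i ω, v⟫ ^ 2 ∧
              ∑ i ∈ S, ⟪X n i ω, v⟫ ^ 2 ≤ c₂ * S.card * ‖v‖ ^ 2 := by
        simp only [hGdef, Set.mem_iInter] at hGk
        exact hGk n hnk
      -- key numeric inequality
      set q : ℝ := Real.sqrt (2 * C₂ / ε) + C₄ * Real.sqrt Λ with hqdef
      have hpn0 : (0:ℝ) < (p n : ℝ) * n := by positivity
      have hqn0 : (0:ℝ) < Real.sqrt ((p n : ℝ) * n) := Real.sqrt_pos.mpr hpn0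
      have hZn : ‖∑ i, (Y n i ω - rho' ⟪X n i ω, β₀ n⟫) • X n i ω‖
          ≤ Real.sqrt (2 * C₂ / ε) * Real.sqrt ((p n : ℝ) * n) := by
        have h11 : ‖∑ i, (Y n i ω - rho' ⟪X n i ω, β₀ n⟫) • X n i ω‖
            = Real.sqrt (Zf ω) := by
          rw [hZfdef]
          exact (Real.sqrt_sq (norm_nonneg _)).symm
        rw [h11]
        calc Real.sqrt (Zf ω) ≤ Real.sqrt Kn := Real.sqrt_le_sqrt hZsmall.le
          _ = Real.sqrt (2 * C₂ / ε * ((p n : ℝ) * n)) := by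
              rw [hKndef]
              congr 1
              field_simp
          _ = Real.sqrt (2 * C₂ / ε) * Real.sqrt ((p n : ℝ) * n) :=
              Real.sqrt_mul (by positivity) _
      have hple : (p n : ℝ) ≤ Real.sqrt ((p n : ℝ) * n) := by
        calc (p n : ℝ) = Real.sqrt ((p n : ℝ) * (p n : ℝ)) :=
              (Real.sqrt_mul_self hpR0.le).symm
          _ ≤ Real.sqrt ((p n : ℝ) * n) :=
              Real.sqrt_le_sqrt (mul_le_mul_of_nonneg_left hplen hpR0.le)
      have hτΛ : τ n * Real.sqrt Λ ≤ C₄ * Real.sqrt ((p n : ℝ) * n) * Real.sqrt Λ := by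
        have h12 : τ n ≤ C₄ * Real.sqrt ((p n : ℝ) * n) :=
          le_trans (hτub n) (mul_le_mul_of_nonneg_left hple hC₄.le)
        exact mul_le_mul_of_nonneg_right h12 (Real.sqrt_nonneg Λ)
      have htn : t * n = Real.sqrt B * Real.sqrt ((p n : ℝ) * n) := by
        have e1 : B * (p n : ℝ) / n = B * ((p n : ℝ) * n) / n ^ 2 := by
          field_simp
        have e2 : t = Real.sqrt (B * ((p n : ℝ) * n)) / n := by
          rw [htdef, e1, Real.sqrt_div (by positivity), Real.sqrt_sq hnR0.le]
        rw [e2, div_mul_cancel₀ _ (ne_of_gt hnR0), Real.sqrt_mul hB0.le]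
      have hsqB : Real.sqrt B = q / cc + 1 := by
        rw [hBdef, hqdef]
        exact Real.sqrt_sq hBbase.le
      have hA4 : c₁ * kap c₂ ζ C₃ * (1 - ζ) / 2 * t * (n:ℝ)
          = q * Real.sqrt ((p n : ℝ) * n) + cc * Real.sqrt ((p n : ℝ) * n) := by
        have e3 : c₁ * kap c₂ ζ C₃ * (1 - ζ) / 2 * t * (n:ℝ) = cc * (t * n) := by
          rw [hccdef, hκdef]
          ring
        rw [e3, htn, hsqB]
        field_simp
      have hkey : ‖∑ i, (Y n i ω - rho' ⟪X n i ω, β₀ n⟫) • X n i ω‖ + τ n * Real.sqrt Λ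
          < c₁ * kap c₂ ζ C₃ * (1 - ζ) / 2 * t * n := by
        have h13 : 0 < cc * Real.sqrt ((p n : ℝ) * n) := mul_pos hcc0 hqn0
        have h14 : Real.sqrt (2 * C₂ / ε) * Real.sqrt ((p n : ℝ) * n)
            + C₄ * Real.sqrt ((p n : ℝ) * n) * Real.sqrt Λ
            = q * Real.sqrt ((p n : ℝ) * n) := by
          rw [hqdef]
          ring
        linarith [hZn, hτΛ, hA4, h13, h14]
      have hdet := det_main (hM n) (fun i => X n i ω) (fun i => Y n i ω) (Xs n) (Ys n)
        (β₀ n) (βhat n ω) (τ n) Λ c₁ c₂ ζ C₃ t hc₁ hc₂ hζ0 hζ1 hC₃ (hβ₀ n) (hτpos n)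
        hΛ.le (hYsbin n) (hop n) hcondn hmaxω ht0 ht1 hkey
      have hω' : t ^ 2 < ‖βhat n ω - β₀ n‖ ^ 2 := by
        rw [← htsq] at hω
        exact hω
      have h15 : ‖βhat n ω - β₀ n‖ ^ 2 < t ^ 2 := by
        nlinarith [hdet, norm_nonneg (βhat n ω - β₀ n)]
      linarith
    calc μ {ω | B * (p n : ℝ) / n < ‖βhat n ω - β₀ n‖ ^ 2}
        ≤ μ (((G k)ᶜ ∪ {ω | Kn ≤ Zf ω}) ∪ bad) := measure_mono hincl
      _ ≤ μ ((G k)ᶜ ∪ {ω | Kn ≤ Zf ω}) + μ bad := measure_union_le _ _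
      _ ≤ (μ (G k)ᶜ + μ {ω | Kn ≤ Zf ω}) + μ bad :=
          add_le_add (measure_union_le _ _) le_rfl
      _ ≤ (ENNReal.ofReal (ε / 2) + ENNReal.ofReal (ε / 2)) + 0 := by
          refine add_le_add (add_le_add hk hMarkov) (le_of_eq hbad0)
      _ = ENNReal.ofReal ε := by
          rw [add_zero, ← ENNReal.ofReal_add (by linarith) (by linarith)]
          norm_num
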